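/- Lemma 7: let m ≥ 4 and let n be the least natural number (n ≥ 1) with G(n, m) = 0. Then there exists a natural number n₂ ≥ 2 such that n = 2·(2·n₂ + 1) and G(n₂ − 1, m) = 2·n₂; that is, the hereditary representation of the (n₂−1)-th term in its base n₂ is 2·n₂^1 + 0·n₂^0. -/

import Mathlib

/-- `hsub b u m` substitutes the value `u` for the base `b` throughout the
hereditary base-`b` representation of `m` (with `hsub b u 0 = 0`). -/
def hsub (b u : ℕ) (m : ℕ) : ℕ :=
  if m = 0 then 0
  else
    u ^ hsub b u (Nat.log b m) * (m / b ^ Nat.log b m) + hsub b u (m % b ^ Nat.log b m)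
termination_by m
decreasing_by
  · exact Nat.log_lt_self b (by assumption)
  · have hpos : 0 < b ^ Nat.log b m := by
      rcases Nat.eq_zero_or_pos b with hb | hb
      · simp [hb]
      · exact pow_pos hb _
    exact lt_of_lt_of_le (Nat.mod_lt _ hpos) (Nat.pow_log_le_self b (by assumption))

/-- Goodstein's base-change ("bumping") function: replace the base `b` by `b + 1`
throughout the hereditary base-`b` representation of `m` (with `B b 0 = 0`). -/
def B (b m : ℕ) : ℕ := hsub b (b + 1) m

/-- The Goodstein sequence of `m`: `G 1 m = m`, and `G (k+1) m = B (k+1) (G k m) - 1`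
for `k ≥ 1` (truncated subtraction), so the `k`-th term is written in hereditary
base `k + 1`. -/
def G : ℕ → ℕ → ℕ
  | 0, m => m
  | 1, m => m
  | (k + 2), m => B (k + 2) (G (k + 1) m) - 1

/-- The auxiliary Goodstein-type sequence: `L 1 k = k ^ k` (written in hereditary
base `k`), and `L (n+1) k = B (k+n-1) (L n k) - 1` for `n ≥ 1` (truncated
subtraction), so the `n`-th term is written in hereditary base `k + n - 1`. -/
def L : ℕ → ℕ → ℕ
  | 0, k => k ^ k
  | 1, k => k ^ k
  | (n + 2), k => B (k + n) (L (n + 1) k) - 1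

/-- `O b m` is the ordinal obtained by substituting `ω` for the base `b`
throughout the hereditary base-`b` representation of `m` (with `O b 0 = 0`). -/
noncomputable def O (b : ℕ) (m : ℕ) : Ordinal :=
  if m = 0 then 0
  else
    Ordinal.omega0 ^ O b (Nat.log b m) * ((m / b ^ Nat.log b m : ℕ) : Ordinal)
      + O b (m % b ^ Nat.log b m)
termination_by m
decreasing_by
  · exact Nat.log_lt_self b (by assumption)
  · have hpos : 0 < b ^ Nat.log b m := by
      rcases Nat.eq_zero_or_pos b with hb | hb
      · simp [hb]
      · exact pow_pos hb _
    exact lt_of_lt_of_le (Nat.mod_lt _ hpos) (Nat.pow_log_le_self b (by assumption))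


lemma hsub_eq (b u m : ℕ) (hm : m ≠ 0) :
    hsub b u m = u ^ hsub b u (Nat.log b m) * (m / b ^ Nat.log b m)
      + hsub b u (m % b ^ Nat.log b m) := by
  conv_lhs => rw [hsub]
  rw [if_neg hm]

lemma hsub_zero' (b u : ℕ) : hsub b u 0 = 0 := by
  rw [hsub]
  simp

lemma hsub_digit (b u d : ℕ) (hd : d < b) : hsub b u d = d := by
  rcases Nat.eq_zero_or_pos d with rfl | hd0
  · exact hsub_zero' b u
  · have hlog : Nat.log b d = 0 := Nat.log_eq_zero_iff.mpr (Or.inl hd)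
    rw [hsub_eq b u d (by omega), hlog, hsub_zero', pow_zero, pow_zero, one_mul,
      Nat.div_one, Nat.mod_one, hsub_zero', add_zero]

lemma hsub_single (b u a d : ℕ) (hb : 2 ≤ b) (ha1 : 1 ≤ a) (hab : a < b) (hd : d < b) :
    hsub b u (a * b + d) = u * a + d := by
  have hm : a * b + d ≠ 0 := by
    have : 0 < a * b := Nat.mul_pos (by omega) (by omega)
    omega
  have hge : b ^ 1 ≤ a * b + d := by
    rw [pow_one]
    have : b ≤ a * b := Nat.le_mul_of_pos_left b (by omega)
    omega
  have hlt : a * b + d < b ^ (1 + 1) := by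
    have h1 : a * b + d < a * b + b := by omega
    have h2 : a * b + b ≤ (b - 1) * b + b := by
      have := Nat.mul_le_mul_right b (show a ≤ b - 1 by omega)
      omega
    have h3 : (b - 1) * b + b = b * b := by
      obtain ⟨c, rfl⟩ : ∃ c, b = c + 2 := ⟨b - 2, by omega⟩
      simp
      ring
    calc a * b + d < a * b + b := h1
      _ ≤ (b - 1) * b + b := h2
      _ = b * b := h3
      _ = b ^ (1 + 1) := by ring
  have hlog : Nat.log b (a * b + d) = 1 := Nat.log_eq_of_pow_le_of_lt_pow hge hlt
  have hdiv : (a * b + d) / b ^ 1 = a := by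
    rw [pow_one, mul_comm a b, Nat.mul_add_div (by omega), Nat.div_eq_of_lt hd, add_zero]
  have hmod : (a * b + d) % b ^ 1 = d := by
    rw [pow_one, mul_comm a b, Nat.mul_add_mod, Nat.mod_eq_of_lt hd]
  rw [hsub_eq _ _ _ hm, hlog, hdiv, hmod, hsub_digit b u 1 (by omega), pow_one,
    hsub_digit b u d hd]
lemma hsub_lt_pow_aux (b u Emax : ℕ) (hb : 2 ≤ b) (hu : b ≤ u)
    (hmono : ∀ p q : ℕ, p < q → q ≤ Emax → hsub b u p < hsub b u q) :
    ∀ x E, E ≤ Emax → x < b ^ E → hsub b u x < u ^ hsub b u E := by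
  intro x
  induction x using Nat.strong_induction_on with
  | _ x IH =>
    intro E hEmax hxE
    rcases Nat.eq_zero_or_pos x with rfl | hx
    · rw [hsub_zero']
      exact pow_pos (by omega) _
    have hxne : x ≠ 0 := by omega
    have hple : b ^ Nat.log b x ≤ x := Nat.pow_log_le_self b hxne
    have hpp : 0 < b ^ Nat.log b x := pow_pos (by omega) _
    have heE : Nat.log b x < E := by
      have h1 : b ^ Nat.log b x < b ^ E := lt_of_le_of_lt hple hxE
      exact (Nat.pow_lt_pow_iff_right (by omega)).mp h1
    have hdlt : x / b ^ Nat.log b x < b := by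
      have h2 : x < b ^ (Nat.log b x + 1) := Nat.lt_pow_succ_log_self (by omega) x
      rw [pow_succ] at h2
      exact Nat.div_lt_of_lt_mul h2
    have hmodlt : x % b ^ Nat.log b x < b ^ Nat.log b x := Nat.mod_lt _ hpp
    have hmodx : x % b ^ Nat.log b x < x := lt_of_lt_of_le hmodlt hple
    have h1 : hsub b u (x % b ^ Nat.log b x) < u ^ hsub b u (Nat.log b x) :=
      IH _ hmodx (Nat.log b x) (by omega) hmodlt
    have h2 : hsub b u (Nat.log b x) < hsub b u E := hmono _ E heE hEmax
    have hupos : 0 < u ^ hsub b u (Nat.log b x) := pow_pos (by omega) _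
    calc hsub b u x
        = u ^ hsub b u (Nat.log b x) * (x / b ^ Nat.log b x)
            + hsub b u (x % b ^ Nat.log b x) := hsub_eq _ _ _ hxne
      _ < u ^ hsub b u (Nat.log b x) * (x / b ^ Nat.log b x)
            + u ^ hsub b u (Nat.log b x) := by omega
      _ = u ^ hsub b u (Nat.log b x) * (x / b ^ Nat.log b x + 1) := by ring
      _ ≤ u ^ hsub b u (Nat.log b x) * u := Nat.mul_le_mul_left _ (by omega)
      _ = u ^ (hsub b u (Nat.log b x) + 1) := by rw [pow_succ]
      _ ≤ u ^ hsub b u E := Nat.pow_le_pow_right (by omega) (by omega)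

lemma hsub_lt (b u : ℕ) (hb : 2 ≤ b) (hu : b ≤ u) :
    ∀ y x, x < y → hsub b u x < hsub b u y := by
  intro y
  induction y using Nat.strong_induction_on with
  | _ y IH =>
    intro x hxy
    have hyne : y ≠ 0 := by omega
    have hmono : ∀ p q : ℕ, p < q → q ≤ Nat.log b y → hsub b u p < hsub b u q :=
      fun p q hpq hq => IH q (lt_of_le_of_lt hq (Nat.log_lt_self b hyne)) p hpq
    have hpe' : 0 < b ^ Nat.log b y := pow_pos (by omega) _
    have hble : b ^ Nat.log b y ≤ y := Nat.pow_log_le_self b hyne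
    have ha' : 1 ≤ y / b ^ Nat.log b y := (Nat.one_le_div_iff hpe').mpr hble
    have hyeq : hsub b u y = u ^ hsub b u (Nat.log b y) * (y / b ^ Nat.log b y)
        + hsub b u (y % b ^ Nat.log b y) := hsub_eq _ _ _ hyne
    have hue : 0 < u ^ hsub b u (Nat.log b y) := pow_pos (by omega) _
    rcases Nat.eq_zero_or_pos x with rfl | hx
    · rw [hsub_zero']
      have h3 : u ^ hsub b u (Nat.log b y) * 1 ≤ u ^ hsub b u (Nat.log b y) * (y / b ^ Nat.log b y) :=
        Nat.mul_le_mul_left _ ha'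
      omega
    have hxne : x ≠ 0 := by omega
    have hee' : Nat.log b x ≤ Nat.log b y := Nat.log_mono_right (le_of_lt hxy)
    rcases lt_or_eq_of_le hee' with hlt | heq
    · have hxlt : x < b ^ Nat.log b y :=
        lt_of_lt_of_le (Nat.lt_pow_succ_log_self (by omega) x)
          (Nat.pow_le_pow_right (by omega) (by omega))
      have h1 : hsub b u x < u ^ hsub b u (Nat.log b y) :=
        hsub_lt_pow_aux b u (Nat.log b y) hb hu hmono x (Nat.log b y) le_rfl hxlt
      have h2 : u ^ hsub b u (Nat.log b y) * 1 ≤ u ^ hsub b u (Nat.log b y) * (y / b ^ Nat.log b y) :=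
        Nat.mul_le_mul_left _ ha'
      omega
    · have hxeq : hsub b u x = u ^ hsub b u (Nat.log b x) * (x / b ^ Nat.log b x)
          + hsub b u (x % b ^ Nat.log b x) := hsub_eq _ _ _ hxne
      have hpe : 0 < b ^ Nat.log b x := pow_pos (by omega) _
      have hmodx : x % b ^ Nat.log b x < b ^ Nat.log b x := Nat.mod_lt _ hpe
      have h1 : hsub b u (x % b ^ Nat.log b x) < u ^ hsub b u (Nat.log b x) :=
        hsub_lt_pow_aux b u (Nat.log b y) hb hu hmono _ (Nat.log b x) (le_of_eq heq) hmodx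
      have hdle : x / b ^ Nat.log b y ≤ y / b ^ Nat.log b y :=
        Nat.div_le_div_right (le_of_lt hxy)
      rw [heq] at hxeq h1
      rcases lt_or_eq_of_le hdle with hd | hd
      · have h2 : u ^ hsub b u (Nat.log b y) * (x / b ^ Nat.log b y + 1)
            ≤ u ^ hsub b u (Nat.log b y) * (y / b ^ Nat.log b y) :=
          Nat.mul_le_mul_left _ (by omega)
        have h3 : u ^ hsub b u (Nat.log b y) * (x / b ^ Nat.log b y + 1)
            = u ^ hsub b u (Nat.log b y) * (x / b ^ Nat.log b y)
              + u ^ hsub b u (Nat.log b y) := by ring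
        omega
      · have hx' := Nat.div_add_mod x (b ^ Nat.log b y)
        have hy' := Nat.div_add_mod y (b ^ Nat.log b y)
        rw [hd] at hx'
        have hmlt : x % b ^ Nat.log b y < y % b ^ Nat.log b y := by omega
        have hylt : y % b ^ Nat.log b y < y := lt_of_lt_of_le (Nat.mod_lt _ hpe') hble
        have h2 : hsub b u (x % b ^ Nat.log b y) < hsub b u (y % b ^ Nat.log b y) :=
          IH _ hylt _ hmlt
        rw [hd] at hxeq
        omega
lemma B_lt {b : ℕ} (hb : 2 ≤ b) {x y : ℕ} (h : x < y) : B b x < B b y :=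
  hsub_lt b (b + 1) hb (by omega) y x h

lemma B_le {b : ℕ} (hb : 2 ≤ b) {x y : ℕ} (h : x ≤ y) : B b x ≤ B b y := by
  rcases lt_or_eq_of_le h with h' | rfl
  · exact le_of_lt (B_lt hb h')
  · exact le_rfl

lemma B_inj {b : ℕ} (hb : 2 ≤ b) {x y : ℕ} (h : B b x = B b y) : x = y := by
  rcases lt_trichotomy x y with h' | h' | h'
  · exact absurd h (ne_of_lt (B_lt hb h'))
  · exact h'
  · exact absurd h.symm (ne_of_lt (B_lt hb h'))

lemma B_zero (b : ℕ) : B b 0 = 0 := hsub_zero' b (b + 1)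

lemma B_pos {b : ℕ} (hb : 2 ≤ b) {x : ℕ} (hx : 0 < x) : 0 < B b x := by
  have := B_lt hb hx
  rw [B_zero] at this
  exact this

lemma B_digit {b d : ℕ} (hd : d < b) : B b d = d := hsub_digit _ _ _ hd

lemma B_single {b a d : ℕ} (hb : 2 ≤ b) (ha1 : 1 ≤ a) (hab : a < b) (hd : d < b) :
    B b (a * b + d) = (b + 1) * a + d :=
  hsub_single b (b + 1) a d hb ha1 hab hd

lemma B_two_two : B 2 2 = 3 := by
  have h := B_single (b := 2) (a := 1) (d := 0) (by norm_num) (by norm_num) (by norm_num)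
    (by norm_num)
  norm_num at h
  exact h

lemma B_two_three : B 2 3 = 4 := by
  have h := B_single (b := 2) (a := 1) (d := 1) (by norm_num) (by norm_num) (by norm_num)
    (by norm_num)
  norm_num at h
  exact h

lemma B_two_four : B 2 4 = 27 := by
  have hlog : Nat.log 2 4 = 2 := Nat.log_eq_of_pow_le_of_lt_pow (by norm_num) (by norm_num)
  show hsub 2 3 4 = 27
  rw [hsub_eq 2 3 4 (by norm_num), hlog]
  norm_num
  rw [show hsub 2 3 2 = 3 from B_two_two, show hsub 2 3 0 = 0 from hsub_zero' 2 3]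
  norm_num

lemma B_two_large {x : ℕ} (hx : 4 ≤ x) : 27 ≤ B 2 x := by
  rcases lt_or_eq_of_le hx with h | rfl
  · have := B_lt (b := 2) (by norm_num) h
    rw [B_two_four] at this
    omega
  · rw [B_two_four]

lemma G_one (m : ℕ) : G 1 m = m := rfl

lemma G_succ (m t : ℕ) (ht : 1 ≤ t) : G (t + 1) m = B (t + 1) (G t m) - 1 := by
  obtain ⟨s, rfl⟩ : ∃ s, t = s + 1 := ⟨t - 1, by omega⟩
  rfl
lemma B_self {b : ℕ} (hb : 2 ≤ b) : B b b = b + 1 := by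
  have h := B_single (b := b) (a := 1) (d := 0) hb le_rfl (by omega) (by omega)
  rw [show 1 * b + 0 = b by ring] at h
  omega

/-- **Lemma 7**: let `m ≥ 4` and let `n` be the least natural number (`n ≥ 1`)
with `G n m = 0`. Then there exists `n₂ ≥ 2` such that `n = 2 * (2 * n₂ + 1)`
and `G (n₂ - 1) m = 2 * n₂` (i.e., the hereditary representation of the
`(n₂-1)`-th term in its base `n₂` is `2·n₂^1 + 0·n₂^0`). -/
theorem goodstein_lemma7 (m n : ℕ) (hm : 4 ≤ m) (hn1 : 1 ≤ n) (hn : G n m = 0)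
    (hmin : ∀ j : ℕ, 1 ≤ j → G j m = 0 → n ≤ j) :
    ∃ n₂ : ℕ, 2 ≤ n₂ ∧ n = 2 * (2 * n₂ + 1) ∧ G (n₂ - 1) m = 2 * n₂ := by
  have hG1 : G 1 m = m := G_one m
  have hn2 : 2 ≤ n := by
    rcases Nat.eq_or_lt_of_le hn1 with h | h
    · rw [← h, hG1] at hn; omega
    · omega
  -- Phase 1: descending digits at the tail
  have P1 : ∀ i : ℕ, 2 * i < n → G (n - i) m = i := by
    intro i
    induction i with
    | zero => intro _; simpa using hn
    | succ i IH =>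
      intro h2
      have hGi : G (n - i) m = i := IH (by omega)
      have ht1 : 1 ≤ n - i - 1 := by omega
      have hrec : G (n - i) m = B (n - i) (G (n - i - 1) m) - 1 := by
        have := G_succ m (n - i - 1) ht1
        rwa [show n - i - 1 + 1 = n - i by omega] at this
      have hB : B (n - i) (G (n - i - 1) m) = i + 1 := by
        rcases Nat.eq_zero_or_pos i with rfl | hi0
        · have hne : G (n - 0 - 1) m ≠ 0 := by
            intro h0
            have := hmin (n - 0 - 1) (by omega) h0
            omega
          have hpos : 0 < B (n - 0) (G (n - 0 - 1) m) :=
            B_pos (by omega) (Nat.pos_of_ne_zero hne)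
          omega
        · omega
      have hcand : B (n - i) (i + 1) = i + 1 := B_digit (by omega)
      have hfin := B_inj (b := n - i) (by omega) (hB.trans hcand.symm)
      rw [show n - (i + 1) = n - i - 1 by omega]
      exact hfin
  -- n is even
  have hneven : n % 2 = 0 := by
    by_contra hodd
    obtain ⟨j, hn'⟩ : ∃ j, n = 2 * j + 1 := ⟨n / 2, by omega⟩
    have hj1 : 1 ≤ j := by omega
    have h1 : G (j + 1) m = j := by
      have := P1 j (by omega)
      rwa [show n - j = j + 1 by omega] at this
    have hrec : G (j + 1) m = B (j + 1) (G j m) - 1 := G_succ m j hj1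
    have hB : B (j + 1) (G j m) = j + 1 := by omega
    have hc : B (j + 1) (j + 1) = j + 2 := B_self (by omega)
    rcases lt_trichotomy (G j m) (j + 1) with hw | hw | hw
    · have := B_digit (b := j + 1) hw
      omega
    · rw [hw] at hB; omega
    · have := B_lt (b := j + 1) (by omega) hw
      omega
  obtain ⟨j, hn'⟩ : ∃ j, n = 2 * j := ⟨n / 2, by omega⟩
  have hj1 : 1 ≤ j := by omega
  -- j ≥ 2
  have hj2 : 2 ≤ j := by
    by_contra h
    have hj1' : j = 1 := by omega
    subst hj1'
    have h2 : G 2 m = B 2 (G 1 m) - 1 := G_succ m 1 le_rfl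
    rw [hG1] at h2
    rw [hn'] at hn
    norm_num at hn
    have h27 := B_two_large hm
    omega
  -- G j m = j
  have hGj : G j m = j := by
    have h1 : G (j + 1) m = j - 1 := by
      have := P1 (j - 1) (by omega)
      rwa [show n - (j - 1) = j + 1 by omega] at this
    have hrec : G (j + 1) m = B (j + 1) (G j m) - 1 := G_succ m j (by omega)
    have hB : B (j + 1) (G j m) = j := by omega
    have hcand : B (j + 1) j = j := B_digit (by omega)
    exact B_inj (by omega) (hB.trans hcand.symm)
  -- Phase 2: the plateau
  have P2 : ∀ s : ℕ, 2 * s ≤ j + 1 → G (j - s) m = j := by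
    intro s
    induction s with
    | zero => intro _; simpa using hGj
    | succ s IH =>
      intro h2
      have hGs : G (j - s) m = j := IH (by omega)
      have ht1 : 1 ≤ j - s - 1 := by omega
      have hrec : G (j - s) m = B (j - s) (G (j - s - 1) m) - 1 := by
        have := G_succ m (j - s - 1) ht1
        rwa [show j - s - 1 + 1 = j - s by omega] at this
      have hB : B (j - s) (G (j - s - 1) m) = j + 1 := by omega
      have hcand : B (j - s) j = j + 1 := by
        have h := B_single (b := j - s) (a := 1) (d := s) (by omega) le_rfl (by omega) (by omega)
        rw [show 1 * (j - s) + s = j by omega] at h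
        omega
      have hfin := B_inj (b := j - s) (by omega) (hB.trans hcand.symm)
      rw [show j - (s + 1) = j - s - 1 by omega]
      exact hfin
  -- j is odd
  have hjodd : j % 2 = 1 := by
    by_contra hodd
    obtain ⟨k, hj'⟩ : ∃ k, j = 2 * k := ⟨j / 2, by omega⟩
    have hk1 : 1 ≤ k := by omega
    rcases Nat.eq_or_lt_of_le hk1 with hk | hk2
    · have h1 := P2 1 (by omega)
      rw [show j - 1 = 1 by omega, hG1] at h1
      omega
    · have hGk : G k m = j := by
        have := P2 k (by omega)
        rwa [show j - k = k by omega] at this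
      have hrec : G k m = B k (G (k - 1) m) - 1 := by
        have := G_succ m (k - 1) (by omega)
        rwa [show k - 1 + 1 = k by omega] at this
      have hB : B k (G (k - 1) m) = 2 * k + 1 := by omega
      rcases Nat.eq_or_lt_of_le hk2 with hk2' | hk3
      · have hk2'' : k = 2 := by omega
        subst hk2''
        norm_num at hB
        rw [hG1] at hB
        have := B_two_large hm
        omega
      · rcases le_or_gt (G (k - 1) m) (2 * k - 1) with hw | hw
        · have h1 : B k (G (k - 1) m) ≤ B k (2 * k - 1) := B_le (by omega) hw
          have h2 : B k (2 * k - 1) = 2 * k := by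
            have h := B_single (b := k) (a := 1) (d := k - 1) (by omega) le_rfl (by omega)
              (by omega)
            rw [show 1 * k + (k - 1) = 2 * k - 1 by omega] at h
            omega
          omega
        · have h1 : B k (2 * k) ≤ B k (G (k - 1) m) := B_le (by omega) (by omega)
          have h2 : B k (2 * k) = 2 * k + 2 := by
            have h := B_single (b := k) (a := 2) (d := 0) (by omega) (by omega) (by omega)
              (by omega)
            rw [show 2 * k + 0 = 2 * k by omega] at h
            omega
          omega
  obtain ⟨k, hj'⟩ : ∃ k, j = 2 * k + 1 := ⟨j / 2, by omega⟩
  have hk1 : 1 ≤ k := by omega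
  have hGk : G k m = j := by
    have := P2 (k + 1) (by omega)
    rwa [show j - (k + 1) = k by omega] at this
  have hk2 : 2 ≤ k := by
    by_contra h
    have hk1' : k = 1 := by omega
    subst hk1'
    rw [hG1] at hGk
    omega
  have hrec : G k m = B k (G (k - 1) m) - 1 := by
    have := G_succ m (k - 1) (by omega)
    rwa [show k - 1 + 1 = k by omega] at this
  have hB : B k (G (k - 1) m) = 2 * k + 2 := by omega
  have hk3 : 3 ≤ k := by
    by_contra h
    have hk2' : k = 2 := by omega
    subst hk2'
    norm_num at hB
    rw [hG1] at hB
    have := B_two_large hm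
    omega
  have hcand : B k (2 * k) = 2 * k + 2 := by
    have h := B_single (b := k) (a := 2) (d := 0) (by omega) (by omega) (by omega) (by omega)
    rw [show 2 * k + 0 = 2 * k by omega] at h
    omega
  have hfin : G (k - 1) m = 2 * k := B_inj (by omega) (hB.trans hcand.symm)
  exact ⟨k, by omega, by omega, hfin⟩
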